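/- Let x = (x_n)_{n∈ω} be the sequence in [0,1] defined by x_0 = 1/3 and x_n = 2^{-ν₂(n)} for nonzero n, where ν₂(n) is the 2-adic valuation of n (the maximal k with 2^k dividing n). Then x has no H-limit points, i.e., Λ_x(H) = ∅; equivalently, there is no infinite set E ⊆ ω such that the subsequence (x_n)_{n∈FS(E)} converges in the ordinary sense. -/

import Mathlib

open Set Filter Topology

/-- `FS(D)`: the set of finite sums of distinct elements of `D`. -/
def FS (D : Set ℕ) : Set ℕ :=
  {n | ∃ α : Finset ℕ, ↑α ⊆ D ∧ α.Nonempty ∧ ∑ i ∈ α, i = n}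

variable {X : Type*}

/-- `η` is an `FS`-limit point of the sequence `x : ω → X`. -/
def IsFSLimitPoint [TopologicalSpace X] (x : ℕ → X) (η : X) : Prop :=
  ∃ D : Set ℕ, D.Infinite ∧ ∀ U ∈ 𝓝 η, ∃ K : Set ℕ, K.Finite ∧
    ∀ n ∈ FS (D \ K), x n ∈ U

/-- `η` is an `FS`-cluster point of the sequence `x : ω → X`. -/
def IsFSClusterPoint [TopologicalSpace X] (x : ℕ → X) (η : X) : Prop :=
  ∀ U ∈ 𝓝 η, ∃ D : Set ℕ, D.Infinite ∧ FS D ⊆ {n | x n ∈ U}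

/-- The Hindman ideal `H`: sets which are not IP-sets. -/
def hindmanIdeal : Set (Set ℕ) :=
  {S | ∀ D : Set ℕ, D.Infinite → ¬ FS D ⊆ S}

/-- `η` is an `I`-limit point of `x`: some subsequence indexed by a set `S ∉ I`
converges (in the ordinary sense) to `η`. -/
def IsIdealLimitPoint [TopologicalSpace X] (I : Set (Set ℕ)) (x : ℕ → X) (η : X) : Prop :=
  ∃ S : Set ℕ, S ∉ I ∧ ∀ U ∈ 𝓝 η, {n ∈ S | x n ∉ U}.Finite

lemma mem_FS_single {E : Set ℕ} {a : ℕ} (ha : a ∈ E) : a ∈ FS E :=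
  ⟨{a}, by simpa using ha, Finset.singleton_nonempty a, by simp⟩

lemma mem_FS_pair {E : Set ℕ} {a b : ℕ} (ha : a ∈ E) (hb : b ∈ E) (hab : a ≠ b) :
    a + b ∈ FS E :=
  ⟨{a, b}, by simp [Set.insert_subset_iff, ha, hb], ⟨a, by simp⟩, Finset.sum_pair hab⟩

lemma v2_add_of_lt {a b : ℕ} (ha : a ≠ 0) (hb : b ≠ 0)
    (h : padicValNat 2 a < padicValNat 2 b) :
    padicValNat 2 (a + b) = padicValNat 2 a := by
  have hab : a + b ≠ 0 := by positivity
  have h1 : (2:ℕ) ^ padicValNat 2 a ∣ a + b :=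
    dvd_add pow_padicValNat_dvd ((padicValNat_dvd_iff_le hb).2 h.le)
  have h2 : ¬ (2:ℕ) ^ (padicValNat 2 a + 1) ∣ a + b := by
    intro hd
    have hdb : (2:ℕ) ^ (padicValNat 2 a + 1) ∣ b := (padicValNat_dvd_iff_le hb).2 h
    have hda : (2:ℕ) ^ (padicValNat 2 a + 1) ∣ a := by
      have := Nat.dvd_sub hd hdb
      rwa [Nat.add_sub_cancel] at this
    exact pow_succ_padicValNat_not_dvd ha hda
  have hle : padicValNat 2 (a + b) ≤ padicValNat 2 a := by
    by_contra hlt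
    exact h2 ((padicValNat_dvd_iff_le hab).2 (Nat.lt_of_not_le hlt))
  exact le_antisymm hle ((padicValNat_dvd_iff_le hab).1 h1)

lemma v2_add_of_eq {a b : ℕ} (ha : a ≠ 0) (hb : b ≠ 0)
    (h : padicValNat 2 a = padicValNat 2 b) :
    padicValNat 2 a + 1 ≤ padicValNat 2 (a + b) := by
  have hab : a + b ≠ 0 := by positivity
  set k := padicValNat 2 a with hk
  have hua : (2:ℕ) ^ k * (a / 2 ^ k) = a := Nat.mul_div_cancel' pow_padicValNat_dvd
  have hub : (2:ℕ) ^ k * (b / 2 ^ k) = b := Nat.mul_div_cancel' (h ▸ pow_padicValNat_dvd)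
  have hou : Odd (a / 2 ^ k) := by
    rw [Nat.odd_iff, ← Nat.two_dvd_ne_zero]
    intro hd
    have hda : (2:ℕ) ^ (k + 1) ∣ 2 ^ k * (a / 2 ^ k) := by
      rw [pow_succ]; exact mul_dvd_mul_left _ hd
    rw [hua] at hda
    exact pow_succ_padicValNat_not_dvd ha hda
  have hov : Odd (b / 2 ^ k) := by
    rw [Nat.odd_iff, ← Nat.two_dvd_ne_zero]
    intro hd
    have hdb : (2:ℕ) ^ (k + 1) ∣ 2 ^ k * (b / 2 ^ k) := by
      rw [pow_succ]; exact mul_dvd_mul_left _ hd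
    rw [hub, h] at hdb
    exact pow_succ_padicValNat_not_dvd hb hdb
  have heven : (2:ℕ) ∣ (a / 2 ^ k + b / 2 ^ k) := (hou.add_odd hov).two_dvd
  have hdvd : (2:ℕ) ^ (k + 1) ∣ a + b := by
    rw [pow_succ, ← hua, ← hub, ← Nat.mul_add]
    exact mul_dvd_mul_left _ heven
  exact (padicValNat_dvd_iff_le hab).1 hdvd

/-- The key combinatorial fact: some value `k` and values `≥ k+1` of `ν₂` both occur
infinitely often on `FS E`. -/
lemma key_combinatorial {E : Set ℕ} (hE : E.Infinite) :
    ∃ k : ℕ, {n | n ∈ FS E ∧ n ≠ 0 ∧ padicValNat 2 n = k}.Infinite ∧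
      {n | n ∈ FS E ∧ n ≠ 0 ∧ k + 1 ≤ padicValNat 2 n}.Infinite := by
  by_cases hA : ∃ k : ℕ, {e ∈ E | e ≠ 0 ∧ padicValNat 2 e = k}.Infinite
  · obtain ⟨k, hk⟩ := hA
    obtain ⟨a, ha, ha0, hak⟩ := hk.nonempty
    refine ⟨k, hk.mono fun e he => ⟨mem_FS_single he.1, he.2⟩, ?_⟩
    have himg : ((a + ·) '' ({e ∈ E | e ≠ 0 ∧ padicValNat 2 e = k} \ {a})).Infinite :=
      ((hk.diff (Set.finite_singleton a)).image (fun u _ v _ huv => by omega))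
    refine himg.mono ?_
    rintro _ ⟨b, ⟨⟨hbE, hb0, hbk⟩, hba⟩, rfl⟩
    have hba' : a ≠ b := fun h => hba (by simp [h])
    refine ⟨mem_FS_pair ha hbE hba', by positivity, ?_⟩
    have := v2_add_of_eq ha0 hb0 (hak.trans hbk.symm)
    rwa [hak] at this
  · push_neg at hA
    obtain ⟨a, ⟨haE, ha0⟩⟩ := (hE.diff (Set.finite_singleton 0)).nonempty
    simp only [Set.mem_diff, Set.mem_singleton_iff] at ha0
    set k := padicValNat 2 a with hk
    have hBfin : {e ∈ E | e ≠ 0 ∧ padicValNat 2 e ≤ k}.Finite := by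
      have : {e ∈ E | e ≠ 0 ∧ padicValNat 2 e ≤ k} ⊆
          ⋃ j ∈ Finset.range (k + 1), {e ∈ E | e ≠ 0 ∧ padicValNat 2 e = j} := by
        rintro e ⟨heE, he0, hle⟩
        exact Set.mem_biUnion (Finset.mem_range.2 (Nat.lt_succ_of_le hle)) ⟨heE, he0, rfl⟩
      exact Set.Finite.subset (Set.Finite.biUnion (Finset.range (k+1)).finite_toSet
        fun j _ => hA j) this
    have hB : {e ∈ E | e ≠ 0 ∧ k + 1 ≤ padicValNat 2 e}.Infinite := by
      refine ((hE.diff (hBfin.union (Set.finite_singleton 0))).mono ?_)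
      rintro e ⟨heE, he⟩
      simp only [Set.mem_union, Set.mem_singleton_iff, not_or] at he
      have he0 : e ≠ 0 := he.2
      exact ⟨heE, he0, by by_contra hc; exact he.1 ⟨heE, he0, by omega⟩⟩
    refine ⟨k, ?_, hB.mono fun e he => ⟨mem_FS_single he.1, he.2⟩⟩
    have himg : ((a + ·) '' {e ∈ E | e ≠ 0 ∧ k + 1 ≤ padicValNat 2 e}).Infinite :=
      hB.image (fun u _ v _ huv => by omega)
    refine himg.mono ?_
    rintro _ ⟨b, ⟨hbE, hb0, hbk⟩, rfl⟩
    have hba : a ≠ b := fun h => by rw [← h] at hbk; omega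
    exact ⟨mem_FS_pair haE hbE hba, by positivity, v2_add_of_lt ha0 hb0 (by omega)⟩

lemma key {x : ℕ → ℝ} (hx : ∀ n : ℕ, n ≠ 0 → x n = (2 : ℝ) ^ (-(padicValNat 2 n : ℤ)))
    {E : Set ℕ} (hE : E.Infinite) (η : ℝ) :
    ¬ ∀ U ∈ 𝓝 η, {n ∈ FS E | x n ∉ U}.Finite := by
  intro hconv
  obtain ⟨k, hP, hQ⟩ := key_combinatorial hE
  set A : ℝ := (2:ℝ) ^ (-(k:ℤ) - 2) with hA
  have hApos : (0:ℝ) < A := by positivity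
  have hF := hconv (Metric.ball η A) (Metric.ball_mem_nhds η hApos)
  obtain ⟨n, ⟨hnFS, hn0, hnk⟩, hnF⟩ := (hP.diff hF).nonempty
  obtain ⟨m, ⟨hmFS, hm0, hmk⟩, hmF⟩ := (hQ.diff hF).nonempty
  have hxn : x n ∈ Metric.ball η A := by
    by_contra hc; exact hnF ⟨hnFS, hc⟩
  have hxm : x m ∈ Metric.ball η A := by
    by_contra hc; exact hmF ⟨hmFS, hc⟩
  rw [Metric.mem_ball, Real.dist_eq, abs_lt] at hxn hxm
  have hxnval : x n = 4 * A := by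
    rw [hx n hn0, hnk, hA,
      show (-(k:ℤ)) = 2 + (-(k:ℤ) - 2) by ring, zpow_add₀ (two_ne_zero : (2:ℝ) ≠ 0)]
    norm_num
  have hxmval : x m ≤ 2 * A := by
    rw [hx m hm0]
    have h1 : (2:ℝ) ^ (-(padicValNat 2 m : ℤ)) ≤ (2:ℝ) ^ (-(k:ℤ) - 1) := by
      apply zpow_le_zpow_right₀ one_le_two
      omega
    have h2 : (2:ℝ) ^ (-(k:ℤ) - 1) = 2 * A := by
      rw [hA, show (-(k:ℤ) - 1) = 1 + (-(k:ℤ) - 2) by ring,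
        zpow_add₀ (two_ne_zero : (2:ℝ) ≠ 0)]
      norm_num
    linarith
  have hxmpos : 0 < x m := by rw [hx m hm0]; positivity
  linarith

theorem no_hindman_limit_points
    (x : ℕ → ℝ) (hx0 : x 0 = 1 / 3)
    (hx : ∀ n : ℕ, n ≠ 0 → x n = (2 : ℝ) ^ (-(padicValNat 2 n : ℤ))) :
    (∀ η : ℝ, ¬ IsIdealLimitPoint hindmanIdeal x η) ∧
      ¬ ∃ E : Set ℕ, E.Infinite ∧
          ∃ η : ℝ, ∀ U ∈ 𝓝 η, {n ∈ FS E | x n ∉ U}.Finite := by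
  constructor
  · rintro η ⟨S, hS, hconv⟩
    simp only [hindmanIdeal, Set.mem_setOf_eq, not_forall, not_not] at hS
    obtain ⟨D, hD, hDS⟩ := hS
    refine key hx hD η fun U hU => (hconv U hU).subset ?_
    rintro n ⟨hn1, hn2⟩
    exact ⟨hDS hn1, hn2⟩
  · rintro ⟨E, hE, η, hconv⟩
    exact key hx hE η hconv
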